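/- The reflection-matching constant exceeds 1: under the stated hypotheses, there exists a constant c > 1 such that u(x) = c·W(−x) for all x ≥ −2. -/

import Mathlib

open Filter Real

section Helpers

private lemma aux_c2 {f : ℝ → ℝ} (hf : ContDiff ℝ 2 f) :
    Differentiable ℝ f ∧ Differentiable ℝ (deriv f) ∧ Continuous (deriv (deriv f)) := by
  have h : ContDiff ℝ ((1 : ℕ) + 1) f := by exact_mod_cast hf
  obtain ⟨h1, -, h2⟩ := contDiff_succ_iff_deriv.mp h
  exact ⟨h1, (contDiff_one_iff_deriv.mp h2).1, (contDiff_one_iff_deriv.mp h2).2⟩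

private lemma aux_comp_neg {f : ℝ → ℝ} (hf : Differentiable ℝ f) (x : ℝ) :
    HasDerivAt (fun y => f (-y)) (-deriv f (-x)) x := by
  simpa [Function.comp_def] using ((hf (-x)).hasDerivAt.comp x (hasDerivAt_neg x))

private lemma deriv_tendsto_zero_atTop {f : ℝ → ℝ} (hf : ContDiff ℝ 2 f) (hpos : ∀ x, 0 < f x)
    (hlim : Tendsto f atTop (nhds 0)) {a : ℝ}
    (hconv : ∀ x ∈ Set.Ioi a, 0 ≤ deriv (deriv f) x) :
    Tendsto (deriv f) atTop (nhds 0) := by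
  obtain ⟨h1, h2, h3⟩ := aux_c2 hf
  have mono : MonotoneOn (deriv f) (Set.Ici a) := by
    apply monotoneOn_of_deriv_nonneg (convex_Ici a) h2.continuous.continuousOn
      h2.differentiableOn
    intro x hx
    exact hconv x (by rwa [interior_Ici] at hx)
  have hub : ∀ x, a + 1 ≤ x → deriv f x ≤ f (x + 1) := by
    intro x hx
    obtain ⟨ξ, hξ, hd⟩ := exists_deriv_eq_slope f (show x < x + 1 by linarith)
      h1.continuous.continuousOn h1.differentiableOn
    have h4 : deriv f x ≤ deriv f ξ := by
      apply mono (show x ∈ Set.Ici a by simp; linarith)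
        (show ξ ∈ Set.Ici a by simp at *; linarith [hξ.1])
      linarith [hξ.1]
    have : deriv f ξ = f (x + 1) - f x := by rw [hd]; ring_nf
    nlinarith [hpos x]
  have hlb : ∀ x, a + 1 ≤ x → -f (x - 1) ≤ deriv f x := by
    intro x hx
    obtain ⟨ξ, hξ, hd⟩ := exists_deriv_eq_slope f (show x - 1 < x by linarith)
      h1.continuous.continuousOn h1.differentiableOn
    have h4 : deriv f ξ ≤ deriv f x := by
      apply mono (show ξ ∈ Set.Ici a by simp at *; linarith [hξ.1])
        (show x ∈ Set.Ici a by simp; linarith)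
      linarith [hξ.2]
    have : deriv f ξ = f x - f (x - 1) := by rw [hd]; ring_nf
    nlinarith [hpos x]
  have hT1 : Tendsto (fun x => f (x + 1)) atTop (nhds 0) :=
    hlim.comp (tendsto_atTop_add_const_right atTop 1 tendsto_id)
  have hT2 : Tendsto (fun x => -f (x - 1)) atTop (nhds (0 : ℝ)) := by
    have := (hlim.comp (tendsto_atTop_add_const_right atTop (-1) tendsto_id)).neg
    simpa [sub_eq_add_neg] using this
  apply tendsto_of_tendsto_of_tendsto_of_le_of_le' hT2 hT1
  · filter_upwards [eventually_ge_atTop (a + 1)] with x hx using hlb x hx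
  · filter_upwards [eventually_ge_atTop (a + 1)] with x hx using hub x hx

private lemma deriv_tendsto_zero_atBot {f : ℝ → ℝ} (hf : ContDiff ℝ 2 f) (hpos : ∀ x, 0 < f x)
    (hlim : Tendsto f atBot (nhds 0)) {a : ℝ}
    (hconv : ∀ x ∈ Set.Iio a, 0 ≤ deriv (deriv f) x) :
    Tendsto (deriv f) atBot (nhds 0) := by
  obtain ⟨h1, h2, h3⟩ := aux_c2 hf
  have mono : MonotoneOn (deriv f) (Set.Iic a) := by
    apply monotoneOn_of_deriv_nonneg (convex_Iic a) h2.continuous.continuousOn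
      h2.differentiableOn
    intro x hx
    exact hconv x (by rwa [interior_Iic] at hx)
  have hub : ∀ x, x ≤ a - 1 → deriv f x ≤ f (x + 1) := by
    intro x hx
    obtain ⟨ξ, hξ, hd⟩ := exists_deriv_eq_slope f (show x < x + 1 by linarith)
      h1.continuous.continuousOn h1.differentiableOn
    have h4 : deriv f x ≤ deriv f ξ := by
      apply mono (show x ∈ Set.Iic a by simp; linarith)
        (show ξ ∈ Set.Iic a by simp at *; linarith [hξ.2])
      linarith [hξ.1]
    have : deriv f ξ = f (x + 1) - f x := by rw [hd]; ring_nf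
    nlinarith [hpos x]
  have hlb : ∀ x, x ≤ a - 1 → -f (x - 1) ≤ deriv f x := by
    intro x hx
    obtain ⟨ξ, hξ, hd⟩ := exists_deriv_eq_slope f (show x - 1 < x by linarith)
      h1.continuous.continuousOn h1.differentiableOn
    have h4 : deriv f ξ ≤ deriv f x := by
      apply mono (show ξ ∈ Set.Iic a by simp at *; linarith [hξ.2])
        (show x ∈ Set.Iic a by simp; linarith)
      linarith [hξ.2]
    have : deriv f ξ = f x - f (x - 1) := by rw [hd]; ring_nf
    nlinarith [hpos x]
  have hT1 : Tendsto (fun x => f (x + 1)) atBot (nhds 0) :=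
    hlim.comp (tendsto_atBot_add_const_right atBot 1 tendsto_id)
  have hT2 : Tendsto (fun x => -f (x - 1)) atBot (nhds (0 : ℝ)) := by
    have := (hlim.comp (tendsto_atBot_add_const_right atBot (-1) tendsto_id)).neg
    simpa [sub_eq_add_neg] using this
  apply tendsto_of_tendsto_of_tendsto_of_le_of_le' hT2 hT1
  · filter_upwards [eventually_le_atBot (a - 1)] with x hx using hlb x hx
  · filter_upwards [eventually_le_atBot (a - 1)] with x hx using hub x hx

end Helpers

/-- The reflection-matching constant exceeds 1: there exists `c > 1` with
`u(x) = c · W(-x)` for all `x ≥ -2`. -/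
theorem reflection_matching_constant_exceeds_one
    (α : ℝ → ℝ) (hαc : Continuous α) (hαnonneg : ∀ x, 0 ≤ α x)
    (hαsupp : ∀ x, x ∉ Set.Ioo (-3 : ℝ) (-2) → α x = 0)
    (x₀ : ℝ) (hαpos : 0 < α x₀)
    (t : ℝ) (ht : 0 < t)
    (lam : ℝ) (hlam1 : 1 < lam) (hlam2 : lam < 2)
    (u : ℝ → ℝ) (hu : ContDiff ℝ 2 u) (hupos : ∀ x, 0 < u x)
    (hueq : ∀ x, -deriv (deriv u) x + (x ^ 2 + t * α x) * u x = lam * u x)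
    (hulim : Tendsto u (cocompact ℝ) (nhds 0))
    (W : ℝ → ℝ) (hW : ContDiff ℝ 2 W)
    (hWeq : ∀ x, deriv (deriv W) x = (x ^ 2 - lam) * W x)
    (hWu : ∀ x ≤ (-3 : ℝ), W x = u x)
    (hWpos : ∀ x ≤ (3 : ℝ), 0 < W x)
    (hWtop : Tendsto W atTop atBot) :
    ∃ c : ℝ, 1 < c ∧ ∀ x ≥ (-2 : ℝ), u x = c * W (-x) := by
  obtain ⟨hu1, hu2, hu3⟩ := aux_c2 hu
  obtain ⟨hW1, hW2, hW3⟩ := aux_c2 hW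
  -- location of x₀
  have hx₀mem : x₀ ∈ Set.Ioo (-3 : ℝ) (-2) := by
    by_contra h
    rw [hαsupp x₀ h] at hαpos
    exact lt_irrefl 0 hαpos
  -- second derivative of u
  have ddu : ∀ x, deriv (deriv u) x = (x ^ 2 + t * α x - lam) * u x := by
    intro x; have := hueq x; nlinarith [this]
  -- the reflected function V
  set V : ℝ → ℝ := fun x => W (-x) with hVdef
  have hVd : ∀ x, HasDerivAt V (-deriv W (-x)) x := fun x => aux_comp_neg hW1 x
  have hV1 : Differentiable ℝ V := fun x => (hVd x).differentiableAt
  have dV : ∀ x, deriv V x = -deriv W (-x) := fun x => (hVd x).deriv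
  have hdVd : ∀ x, HasDerivAt (deriv V) ((x ^ 2 - lam) * V x) x := by
    intro x
    have h0 : HasDerivAt (fun y => -deriv W (-y)) (deriv (deriv W) (-x)) x := by
      have h := (aux_comp_neg hW2 x).neg; rw [neg_neg] at h; exact h
    have h1 : HasDerivAt (fun y => -deriv W (-y)) ((x ^ 2 - lam) * V x) x := by
      rw [hWeq (-x)] at h0
      convert h0 using 1
      simp only [hVdef]; ring
    exact h1.congr_of_eventuallyEq (by filter_upwards with y using (dV y))
  have hV2 : Differentiable ℝ (deriv V) := fun x => (hdVd x).differentiableAt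
  have hVpos : ∀ x, -3 ≤ x → 0 < V x := fun x hx => hWpos (-x) (by linarith)
  -- derivatives of u and W agree on Iic (-3)
  have hduW : ∀ x ≤ (-3 : ℝ), deriv u x = deriv W x := by
    have hlt : ∀ x < (-3 : ℝ), deriv u x = deriv W x := by
      intro x hx
      have h : u =ᶠ[nhds x] W := by
        filter_upwards [Iio_mem_nhds hx] with y hy using (hWu y (le_of_lt hy)).symm
      exact h.deriv_eq
    intro x hx
    rcases lt_or_eq_of_le hx with h | h
    · exact hlt x h
    · subst h
      have h1 : Tendsto (deriv u) (nhdsWithin (-3 : ℝ) (Set.Iio (-3)))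
          (nhds (deriv u (-3))) := (hu2.continuous.tendsto (-3)).mono_left nhdsWithin_le_nhds
      have h2 : Tendsto (deriv W) (nhdsWithin (-3 : ℝ) (Set.Iio (-3)))
          (nhds (deriv W (-3))) := (hW2.continuous.tendsto (-3)).mono_left nhdsWithin_le_nhds
      have h3 : Tendsto (deriv u) (nhdsWithin (-3 : ℝ) (Set.Iio (-3)))
          (nhds (deriv W (-3))) := by
        apply h2.congr'
        filter_upwards [self_mem_nhdsWithin] with y hy using (hlt y hy).symm
      exact tendsto_nhds_unique h1 h3
  have hWu3 : W (-3) = u (-3) := hWu _ le_rfl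
  -- the Wronskian of u and V
  set ω : ℝ → ℝ := fun x => u x * deriv V x - deriv u x * V x with hωdef
  have hωd : ∀ x, HasDerivAt ω (-(t * α x) * (u x * V x)) x := by
    intro x
    have e1 : HasDerivAt (fun y => u y * deriv V y)
        (deriv u x * deriv V x + u x * ((x ^ 2 - lam) * V x)) x :=
      (hu1 x).hasDerivAt.mul (hdVd x)
    have e2 : HasDerivAt (deriv u) ((x ^ 2 + t * α x - lam) * u x) x := by
      have := (hu2 x).hasDerivAt; rwa [ddu x] at this
    have e3 : HasDerivAt (fun y => deriv u y * V y)
        ((x ^ 2 + t * α x - lam) * u x * V x + deriv u x * (-deriv W (-x))) x :=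
      e2.mul (hVd x)
    have := e1.sub e3
    refine this.congr_deriv ?_
    rw [← dV x]
    ring
  have hω1 : Differentiable ℝ ω := fun x => (hωd x).differentiableAt
  have dω : ∀ x, deriv ω x = -(t * α x) * (u x * V x) := fun x => (hωd x).deriv
  have hαzero : ∀ x : ℝ, -2 ≤ x → α x = 0 := by
    intro x hx
    apply hαsupp
    simp only [Set.mem_Ioo, not_and_or, not_lt]
    right; linarith
  -- ω is constant on Ici (-2)
  have hωconstIci : ∀ x, -2 ≤ x → ω x = ω (-2) := by
    have hz : ∀ y ∈ interior (Set.Ici (-2 : ℝ)), deriv ω y = 0 := by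
      intro y hy
      rw [interior_Ici] at hy
      rw [dω y, hαzero y (le_of_lt hy)]
      ring
    have hmono := monotoneOn_of_deriv_nonneg (convex_Ici (-2 : ℝ))
      hω1.continuous.continuousOn hω1.differentiableOn (fun y hy => (hz y hy).ge)
    have hanti := antitoneOn_of_deriv_nonpos (convex_Ici (-2 : ℝ))
      hω1.continuous.continuousOn hω1.differentiableOn (fun y hy => (hz y hy).le)
    intro x hx
    exact le_antisymm (hanti Set.self_mem_Ici hx hx) (hmono Set.self_mem_Ici hx hx)
  -- limits of u and deriv u
  have hTu : Tendsto u atTop (nhds 0) :=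
    hulim.mono_left (by rw [cocompact_eq_atBot_atTop]; exact le_sup_right)
  have hBu : Tendsto u atBot (nhds 0) :=
    hulim.mono_left (by rw [cocompact_eq_atBot_atTop]; exact le_sup_left)
  have hTdu : Tendsto (deriv u) atTop (nhds 0) := by
    apply deriv_tendsto_zero_atTop hu hupos hTu (a := 2)
    intro x hx
    simp only [Set.mem_Ioi] at hx
    rw [ddu x]
    have h1 : 0 ≤ t * α x := mul_nonneg ht.le (hαnonneg x)
    have h2 : 0 < x ^ 2 + t * α x - lam := by nlinarith [mul_pos (show (0:ℝ) < x - 2 by linarith) (show (0:ℝ) < x + 2 by linarith)]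
    exact mul_nonneg h2.le (hupos x).le
  have hBdu : Tendsto (deriv u) atBot (nhds 0) := by
    apply deriv_tendsto_zero_atBot hu hupos hBu (a := -3)
    intro x hx
    simp only [Set.mem_Iio] at hx
    rw [ddu x]
    have h1 : 0 ≤ t * α x := mul_nonneg ht.le (hαnonneg x)
    have h2 : 0 < x ^ 2 + t * α x - lam := by nlinarith [mul_pos_of_neg_of_neg (show x - 3 < 0 by linarith) (show x + 3 < 0 by linarith)]
    exact mul_nonneg h2.le (hupos x).le
  -- ω tends to 0 at +infinity
  have hωlim : Tendsto ω atTop (nhds 0) := by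
    have heq : (fun x => -(u x * deriv u (-x)) - deriv u x * u (-x)) =ᶠ[atTop] ω := by
      filter_upwards [eventually_ge_atTop (3 : ℝ)] with x hx
      have h1 : V x = u (-x) := hWu (-x) (by linarith)
      have h2 : deriv V x = -deriv u (-x) := by
        rw [dV x, hduW (-x) (by linarith)]
      simp only [hωdef, h1, h2]
      ring
    have hmain : Tendsto (fun x => -(u x * deriv u (-x)) - deriv u x * u (-x)) atTop
        (nhds 0) := by
      have c1 : Tendsto (fun x : ℝ => deriv u (-x)) atTop (nhds 0) :=
        hBdu.comp tendsto_neg_atTop_atBot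
      have c2 : Tendsto (fun x : ℝ => u (-x)) atTop (nhds 0) :=
        hBu.comp tendsto_neg_atTop_atBot
      have := ((hTu.mul c1).neg).sub (hTdu.mul c2)
      simpa using this
    exact hmain.congr' heq
  -- hence ω vanishes on Ici (-2)
  have hω2 : ω (-2) = 0 := by
    have h1 : Tendsto ω atTop (nhds (ω (-2))) := by
      have hc : Tendsto (fun _ : ℝ => ω (-2)) atTop (nhds (ω (-2))) := tendsto_const_nhds
      apply hc.congr'
      filter_upwards [eventually_ge_atTop (-2 : ℝ)] with x hx using (hωconstIci x hx).symm
    exact tendsto_nhds_unique h1 hωlim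
  have hωIci : ∀ x, -2 ≤ x → ω x = 0 := fun x hx => (hωconstIci x hx).trans hω2
  -- the matching constant
  have hVne : ∀ x : ℝ, -3 ≤ x → V x ≠ 0 := fun x hx => (hVpos x hx).ne'
  set c : ℝ := u (-2) / V (-2) with hcdef
  have hm3mem : (-3 : ℝ) ∈ Set.Icc (-3 : ℝ) (-2) := Set.left_mem_Icc.mpr (by norm_num)
  have hm2mem : (-2 : ℝ) ∈ Set.Icc (-3 : ℝ) (-2) := Set.right_mem_Icc.mpr (by norm_num)
  -- the ratio u / V is constant on Ici (-2)
  have hratio : ∀ x, -2 ≤ x → u x / V x = c := by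
    have hdiffAt : ∀ y : ℝ, -3 ≤ y → DifferentiableAt ℝ (fun z => u z / V z) y :=
      fun y hy => (hu1 y).div (hV1 y) (hVne y hy)
    have hdiff : DifferentiableOn ℝ (fun z => u z / V z) (Set.Ici (-2 : ℝ)) := fun y hy =>
      (hdiffAt y (by have := Set.mem_Ici.mp hy; linarith)).differentiableWithinAt
    have hz : ∀ y ∈ interior (Set.Ici (-2 : ℝ)), deriv (fun z => u z / V z) y = 0 := by
      intro y hy
      rw [interior_Ici] at hy
      have hy' : (-2 : ℝ) ≤ y := le_of_lt hy
      rw [deriv_fun_div (hu1 y) (hV1 y) (hVne y (by linarith))]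
      have hnum : deriv u y * V y - u y * deriv V y = -(ω y) := by simp only [hωdef]; ring
      rw [hnum, hωIci y hy']
      simp
    have hdiffInt : DifferentiableOn ℝ (fun z => u z / V z) (interior (Set.Ici (-2 : ℝ))) :=
      hdiff.mono interior_subset
    have hmono := monotoneOn_of_deriv_nonneg (convex_Ici (-2 : ℝ))
      hdiff.continuousOn hdiffInt (fun y hy => (hz y hy).ge)
    have hanti := antitoneOn_of_deriv_nonpos (convex_Ici (-2 : ℝ))
      hdiff.continuousOn hdiffInt (fun y hy => (hz y hy).le)
    intro x hx
    have := le_antisymm (hanti Set.self_mem_Ici hx hx) (hmono Set.self_mem_Ici hx hx)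
    simpa [hcdef] using this
  have hmainEq : ∀ x, -2 ≤ x → u x = c * V x := by
    intro x hx
    have h := hratio x hx
    rw [div_eq_iff (hVne x (by linarith))] at h
    rw [h, mul_comm]
  -- the Wronskian of u and W
  set ψ : ℝ → ℝ := fun x => u x * deriv W x - deriv u x * W x with hψdef
  have eW : ∀ x : ℝ, HasDerivAt (deriv W) ((x ^ 2 - lam) * W x) x := by
    intro x
    have := (hW2 x).hasDerivAt; rwa [hWeq x] at this
  have hψd : ∀ x, HasDerivAt ψ (-(t * α x) * (u x * W x)) x := by
    intro x
    have e1 : HasDerivAt (fun y => u y * deriv W y)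
        (deriv u x * deriv W x + u x * ((x ^ 2 - lam) * W x)) x :=
      (hu1 x).hasDerivAt.mul (eW x)
    have e2 : HasDerivAt (deriv u) ((x ^ 2 + t * α x - lam) * u x) x := by
      have := (hu2 x).hasDerivAt; rwa [ddu x] at this
    have e3 : HasDerivAt (fun y => deriv u y * W y)
        ((x ^ 2 + t * α x - lam) * u x * W x + deriv u x * deriv W x) x :=
      e2.mul (hW1 x).hasDerivAt
    have := e1.sub e3
    refine this.congr_deriv ?_
    ring
  have hψ1 : Differentiable ℝ ψ := fun x => (hψd x).differentiableAt
  have hψ3 : ψ (-3) = 0 := by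
    simp only [hψdef]
    rw [hWu3, hduW (-3) le_rfl]
    ring
  -- ψ cannot vanish identically on the bump interval
  have hψnot : ¬ (∀ y ∈ Set.Ioo (-3 : ℝ) (-2), ψ y = 0) := by
    intro hall
    have heq : ψ =ᶠ[nhds x₀] fun _ => 0 := by
      filter_upwards [isOpen_Ioo.mem_nhds hx₀mem] with y hy using hall y hy
    have h1 : deriv ψ x₀ = 0 := by rw [heq.deriv_eq]; simp
    rw [(hψd x₀).deriv] at h1
    have hW0 : 0 < W x₀ := hWpos x₀ (by have := hx₀mem.2; linarith)
    have := mul_pos (mul_pos ht hαpos) (mul_pos (hupos x₀) hW0)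
    linarith
  have hWposIcc : ∀ y ∈ Set.Icc (-3 : ℝ) (-2), 0 < W y := fun y hy =>
    hWpos y (by have := hy.2; linarith)
  have hψanti : AntitoneOn ψ (Set.Icc (-3 : ℝ) (-2)) := by
    apply antitoneOn_of_deriv_nonpos (convex_Icc _ _) hψ1.continuous.continuousOn
      hψ1.differentiableOn
    intro y hy
    rw [interior_Icc] at hy
    rw [(hψd y).deriv]
    have h1 := mul_nonneg (mul_nonneg ht.le (hαnonneg y))
      (mul_nonneg (hupos y).le (hWpos y (by linarith [hy.2])).le)
    linarith
  -- the ratio u / W is monotone on [-3, -2]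
  have hρmono : MonotoneOn (fun z => u z / W z) (Set.Icc (-3 : ℝ) (-2)) := by
    have hdAt : ∀ y ∈ Set.Icc (-3 : ℝ) (-2), DifferentiableAt ℝ (fun z => u z / W z) y :=
      fun y hy => (hu1 y).div (hW1 y) (hWposIcc y hy).ne'
    apply monotoneOn_of_deriv_nonneg (convex_Icc _ _)
      (fun y hy => (hdAt y hy).continuousAt.continuousWithinAt)
      (fun y hy => (hdAt y (interior_subset hy)).differentiableWithinAt)
    intro y hy
    rw [interior_Icc] at hy
    have hyIcc : y ∈ Set.Icc (-3 : ℝ) (-2) := ⟨hy.1.le, hy.2.le⟩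
    rw [deriv_fun_div (hu1 y) (hW1 y) (hWposIcc y hyIcc).ne']
    have hψy : ψ y ≤ 0 := by
      have := hψanti hm3mem hyIcc hy.1.le
      linarith [hψ3]
    have hnum : deriv u y * W y - u y * deriv W y = -(ψ y) := by simp only [hψdef]; ring
    rw [hnum]
    apply div_nonneg (by linarith) (sq_nonneg _)
  -- u(-2) > W(-2)
  have hu2W2 : W (-2) < u (-2) := by
    by_contra hcon
    push_neg at hcon
    have hrm3 : u (-3) / W (-3) = 1 := by rw [hWu3]; exact div_self (hupos (-3)).ne'
    have hWm2 : 0 < W (-2) := hWposIcc _ hm2mem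
    have hr2 : u (-2) / W (-2) ≤ 1 := by rw [div_le_one hWm2]; exact hcon
    have hconst : ∀ y ∈ Set.Ioo (-3 : ℝ) (-2), u y = W y := by
      intro y hy
      have hyIcc : y ∈ Set.Icc (-3 : ℝ) (-2) := ⟨hy.1.le, hy.2.le⟩
      have m1 : u (-3) / W (-3) ≤ u y / W y := hρmono hm3mem hyIcc hy.1.le
      have m2 : u y / W y ≤ u (-2) / W (-2) := hρmono hyIcc hm2mem hy.2.le
      have hone : u y / W y = 1 := by rw [hrm3] at m1; linarith
      have hWy := hWposIcc y hyIcc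
      rwa [div_eq_one_iff_eq hWy.ne'] at hone
    apply hψnot
    intro y hy
    have he : u =ᶠ[nhds y] W := by
      filter_upwards [isOpen_Ioo.mem_nhds hy] with z hz using hconst z hz
    have hde : deriv u y = deriv W y := he.deriv_eq
    simp only [hψdef]
    rw [hconst y hy, hde]
    ring
  -- the Wronskian of W and V is constant
  set m : ℝ → ℝ := fun x => W x * deriv V x - deriv W x * V x with hmdef
  have hmd : ∀ x, HasDerivAt m 0 x := by
    intro x
    have e1 : HasDerivAt (fun y => W y * deriv V y)
        (deriv W x * deriv V x + W x * ((x ^ 2 - lam) * V x)) x :=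
      (hW1 x).hasDerivAt.mul (hdVd x)
    have e2 : HasDerivAt (fun y => deriv W y * V y)
        ((x ^ 2 - lam) * W x * V x + deriv W x * (-deriv W (-x))) x :=
      (eW x).mul (hVd x)
    have := e1.sub e2
    refine this.congr_deriv ?_
    rw [← dV x]
    ring
  have hmconst : ∀ x : ℝ, m x = m (-3) := fun x =>
    is_const_of_deriv_eq_zero (fun z => (hmd z).differentiableAt)
      (fun z => (hmd z).deriv) x (-3)
  have hm3 : m (-3) = ω (-3) := by
    simp only [hmdef, hωdef]
    rw [hWu3, hduW (-3) le_rfl]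
  -- ω(-3) > 0
  have hωanti : AntitoneOn ω (Set.Icc (-3 : ℝ) (-2)) := by
    apply antitoneOn_of_deriv_nonpos (convex_Icc _ _) hω1.continuous.continuousOn
      hω1.differentiableOn
    intro y hy
    rw [interior_Icc] at hy
    rw [dω y]
    have h1 := mul_nonneg (mul_nonneg ht.le (hαnonneg y))
      (mul_nonneg (hupos y).le (hVpos y (by linarith [hy.1])).le)
    linarith
  have hω3pos : 0 < ω (-3) := by
    have hge : 0 ≤ ω (-3) := by
      have := hωanti hm3mem hm2mem (by norm_num)
      linarith [hω2]
    rcases hge.lt_or_eq with h | h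
    · exact h
    · exfalso
      have hzero : ∀ y ∈ Set.Ioo (-3 : ℝ) (-2), ω y = 0 := by
        intro y hy
        have hyIcc : y ∈ Set.Icc (-3 : ℝ) (-2) := ⟨hy.1.le, hy.2.le⟩
        have m1 : ω y ≤ ω (-3) := hωanti hm3mem hyIcc hy.1.le
        have m2 : ω (-2) ≤ ω y := hωanti hyIcc hm2mem hy.2.le
        rw [hω2] at m2
        linarith [h]
      have heq : ω =ᶠ[nhds x₀] fun _ => 0 := by
        filter_upwards [isOpen_Ioo.mem_nhds hx₀mem] with y hy using hzero y hy
      have h1 : deriv ω x₀ = 0 := by rw [heq.deriv_eq]; simp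
      rw [dω x₀] at h1
      have hV0 : 0 < V x₀ := hVpos x₀ hx₀mem.1.le
      have := mul_pos (mul_pos ht hαpos) (mul_pos (hupos x₀) hV0)
      linarith
  have hmval : ∀ x : ℝ, m x = ω (-3) := fun x => (hmconst x).trans hm3
  -- W(-2) > W(2) via the ratio V / W on [0, 2]
  have hW2pos : 0 < W 2 := hWpos 2 (by norm_num)
  have hW0pos : 0 < W 0 := hWpos 0 (by norm_num)
  have hRmono : StrictMonoOn (fun z => V z / W z) (Set.Icc (0 : ℝ) 2) := by
    apply strictMonoOn_of_deriv_pos (convex_Icc _ _)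
    · intro y hy
      exact ((hV1 y).div (hW1 y)
        (hWpos y (by have := hy.2; linarith)).ne').continuousAt.continuousWithinAt
    · intro y hy
      rw [interior_Icc] at hy
      have hWy : 0 < W y := hWpos y (by linarith [hy.2])
      rw [deriv_fun_div (hV1 y) (hW1 y) hWy.ne']
      have hnum : deriv V y * W y - V y * deriv W y = m y := by simp only [hmdef]; ring
      rw [hnum, hmval y]
      exact div_pos hω3pos (by positivity)
  have hWfinal : W 2 < W (-2) := by
    have hlt : V 0 / W 0 < V 2 / W 2 := hRmono (Set.left_mem_Icc.mpr (by norm_num))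
      (Set.right_mem_Icc.mpr (by norm_num)) (by norm_num)
    have h0 : V 0 / W 0 = 1 := by
      have hv0 : V 0 = W 0 := by simp [hVdef]
      rw [hv0]; exact div_self hW0pos.ne'
    have h2v : V 2 = W (-2) := rfl
    rw [h0, h2v] at hlt
    rw [← one_lt_div hW2pos]
    exact hlt
  -- conclusion
  refine ⟨c, ?_, ?_⟩
  · have hV2W : V (-2) = W 2 := by norm_num [hVdef]
    rw [hcdef, hV2W]
    rw [one_lt_div hW2pos]
    linarith [hu2W2, hWfinal]
  · intro x hx
    have h := hmainEq x hx
    simpa [hVdef] using h
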